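/- Let U be open in a complex Banach space E, v a weight on U, F a complex Banach space, and f ∈ H^∞_v(U,F) a right p-nuclear weighted holomorphic map for p ∈ (1,∞): f = ∑_n g_n·y_n in (H^∞_v(U,F), ‖·‖_v) with (g_n) weakly p*-summable in H^∞_v(U,ℂ) and (y_n) ∈ ℓ_p(F). Then (vf)(U) = {v(x)f(x) : x ∈ U} is a relatively p-compact subset of F. -/

import Mathlib

open scoped BigOperators Classical

noncomputable section

variable {E : Type*} [NormedAddCommGroup E] [NormedSpace ℂ E]

/-- Coefficient sequences: the closed unit ball of `ℓ_{p*}` (where `p* = p/(p-1)`)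
for `p > 1`, and the closed unit ball of `c₀` for `p = 1`. -/
def CoefBall (p : ℝ) (a : ℕ → ℂ) : Prop :=
  if p = 1 then
    Filter.Tendsto (fun n => ‖a n‖) Filter.atTop (nhds 0) ∧ ∀ n, ‖a n‖ ≤ 1
  else
    ∀ s : Finset ℕ, ∑ n ∈ s, ‖a n‖ ^ (p / (p - 1)) ≤ 1

/-- The `p`-convex hull of a sequence `(x_n)`: all convergent sums `∑ a_n x_n`
with `(a_n)` in the appropriate coefficient ball. -/
def pConv (p : ℝ) (x : ℕ → E) : Set E :=
  {y | ∃ a : ℕ → ℂ, CoefBall p a ∧ HasSum (fun n => a n • x n) y}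

/-- A set is relatively `p`-compact if it is contained in the `p`-convex hull of
some `p`-summable sequence. -/
def RelPCompact (p : ℝ) (K : Set E) : Prop :=
  ∃ x : ℕ → E, Summable (fun n => ‖x n‖ ^ p) ∧ K ⊆ pConv p x

/-- The measure of `p`-compactness of a set `K`. -/
def mKp (p : ℝ) (K : Set E) : ℝ :=
  sInf {r : ℝ | ∃ x : ℕ → E, Summable (fun n => ‖x n‖ ^ p) ∧ K ⊆ pConv p x ∧
    (∑' n, ‖x n‖ ^ p) ^ (1 / p) = r}

end

/-- If `f ∈ H^∞_v(U,F)` is right `p`-nuclear, i.e. `f = ∑ g_n · y_n` in the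
`v`-norm with `(g_n)` weakly `p^*`-summable in `H^∞_v(U)` (tested against all
linear functionals bounded on the unit ball of `H^∞_v(U)`) and `(y_n) ∈ ℓ_p(F)`,
then the `v`-range `(vf)(U)` is relatively `p`-compact in `F`. -/
theorem stmt19 {E F : Type*} [NormedAddCommGroup E] [NormedSpace ℂ E]
    [NormedAddCommGroup F] [NormedSpace ℂ F] [CompleteSpace F]
    (U : Set E) (hU : IsOpen U) (v : E → ℝ) (hv : ContinuousOn v U)
    (hvpos : ∀ x ∈ U, 0 < v x)
    {p q : ℝ} (hp : 1 < p) (hq : 1 / p + 1 / q = 1)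
    (f : E → F) (hf : DifferentiableOn ℂ f U)
    (g : ℕ → E → ℂ) (hgdiff : ∀ n, DifferentiableOn ℂ (g n) U)
    (hgbdd : ∀ n, ∃ C : ℝ, ∀ x ∈ U, v x * ‖g n x‖ ≤ C)
    (y : ℕ → F) (hy : Summable fun n => ‖y n‖ ^ p)
    (hweak : ∃ C : ℝ, ∀ φ : (E → ℂ) →ₗ[ℂ] ℂ,
      (∀ h : E → ℂ, DifferentiableOn ℂ h U → (∀ x ∈ U, v x * ‖h x‖ ≤ 1) → ‖φ h‖ ≤ 1) →
      ∀ s : Finset ℕ, ∑ n ∈ s, ‖φ (g n)‖ ^ q ≤ C)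
    (hconv : ∀ ε > (0:ℝ), ∃ N : ℕ, ∀ n ≥ N, ∀ x ∈ U,
      v x * ‖f x - ∑ k ∈ Finset.range n, g k x • y k‖ ≤ ε) :
    RelPCompact p ((fun x => v x • f x) '' U) := by

  classical
  have hp0 : (0:ℝ) < p := lt_trans one_pos hp
  have hpne1 : p ≠ 1 := ne_of_gt hp
  have hpq : p.HolderConjugate q := Real.holderConjugate_iff.mpr ⟨hp, by rw [← one_div, ← one_div]; exact hq⟩
  have hq0 : (0:ℝ) < q := hpq.symm.pos
  have hqne : q ≠ 0 := ne_of_gt hq0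
  have hq' : p / (p - 1) = q := by
    have hp1 : p - 1 ≠ 0 := by intro h; apply hpne1; linarith
    have hpne : p ≠ 0 := ne_of_gt hp0
    field_simp at hq ⊢
    nlinarith [hq]
  obtain ⟨C, hC⟩ := hweak
  set B : ℝ := max C 1 with hB
  have hB1 : (1:ℝ) ≤ B := le_max_right _ _
  have hB0 : (0:ℝ) < B := lt_of_lt_of_le one_pos hB1
  set M : ℝ := B ^ (1/q) with hM
  have hM0 : (0:ℝ) < M := Real.rpow_pos_of_pos hB0 _
  have hMq : M ^ q = B := by
    rw [hM, ← Real.rpow_mul hB0.le, one_div_mul_cancel hqne, Real.rpow_one]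
  -- the weak bound applied at evaluation functionals
  have hev : ∀ x ∈ U, ∀ s : Finset ℕ, ∑ n ∈ s, (v x * ‖g n x‖) ^ q ≤ C := by
    intro x hx s
    set φ : (E → ℂ) →ₗ[ℂ] ℂ :=
      { toFun := fun h => (v x : ℂ) * h x
        map_add' := fun a b => by simp [mul_add]
        map_smul' := fun c a => by simp; ring }
    have hφ : ∀ h : E → ℂ, DifferentiableOn ℂ h U → (∀ z ∈ U, v z * ‖h z‖ ≤ 1) →
        ‖φ h‖ ≤ 1 := by
      intro h _ hb
      have := hb x hx
      have hvx := (hvpos x hx).le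
      simpa [φ, norm_mul, Complex.norm_real, abs_of_nonneg hvx] using this
    have := hC φ hφ s
    have heq : ∀ n, ‖φ (g n)‖ = v x * ‖g n x‖ := by
      intro n
      simp [φ, norm_mul, Complex.norm_real, abs_of_nonneg (hvpos x hx).le]
    calc ∑ n ∈ s, (v x * ‖g n x‖) ^ q = ∑ n ∈ s, ‖φ (g n)‖ ^ q := by
          refine Finset.sum_congr rfl fun n _ => by rw [heq]
      _ ≤ C := this
  refine ⟨fun n => M • y n, ?_, ?_⟩
  · have : ∀ n, ‖M • (y n)‖ ^ p = M ^ p * ‖y n‖ ^ p := by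
      intro n
      rw [norm_smul, Real.norm_eq_abs, abs_of_pos hM0, Real.mul_rpow hM0.le (norm_nonneg _)]
    simpa [this] using hy.mul_left (M ^ p)
  · rintro w ⟨x, hx, rfl⟩
    have hvx : 0 < v x := hvpos x hx
    set a : ℕ → ℂ := fun n => ((v x : ℂ) * g n x) / (M : ℂ) with ha
    have hanorm : ∀ n, ‖a n‖ = v x * ‖g n x‖ / M := by
      intro n
      simp [ha, norm_div, norm_mul, Complex.norm_real, abs_of_pos hvx, abs_of_pos hM0]
    refine ⟨a, ?_, ?_⟩
    · -- coefficient ball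
      rw [CoefBall, if_neg hpne1]
      intro s
      have h1 : ∑ n ∈ s, ‖a n‖ ^ (p / (p-1)) = (∑ n ∈ s, (v x * ‖g n x‖) ^ q) / B := by
        rw [Finset.sum_div]
        refine Finset.sum_congr rfl fun n _ => ?_
        rw [hanorm n, hq', Real.div_rpow (by positivity) hM0.le, hMq]
      rw [h1, div_le_one hB0]
      exact le_trans (hev x hx s) (le_max_left _ _)
    · -- HasSum
      have hkey : ∀ n, a n • (M • y n) = v x • (g n x • y n) := by
        intro n
        rw [← Complex.coe_smul M (y n), smul_smul, div_mul_cancel₀ _ (by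
          simpa using ne_of_gt hM0 : (M:ℂ) ≠ 0)]
        rw [← Complex.coe_smul (v x), smul_smul]
      -- summability of the series
      have hsq : Summable (fun n => (v x * ‖g n x‖) ^ q) := by
        refine summable_of_sum_range_le (c := C) (fun n => by positivity) (fun n => ?_)
        exact hev x hx (Finset.range n)
      have hsummable : Summable (fun n => v x • (g n x • y n)) := by
        refine Summable.of_norm ?_
        refine Summable.of_nonneg_of_le (fun n => norm_nonneg _)
          (fun n => ?_) ((hsq.div_const q).add (hy.div_const p))
        have : ‖v x • (g n x • y n)‖ = (v x * ‖g n x‖) * ‖y n‖ := by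
          rw [norm_smul, norm_smul, Real.norm_eq_abs, abs_of_pos hvx, mul_assoc]
        rw [this]
        exact Real.young_inequality_of_nonneg (by positivity) (norm_nonneg _) hpq.symm
      have hhs := hsummable.hasSum
      have hlim : Filter.Tendsto (fun n => ∑ k ∈ Finset.range n, v x • (g k x • y k))
          Filter.atTop (nhds (v x • f x)) := by
        rw [Metric.tendsto_atTop]
        intro ε hε
        obtain ⟨N, hN⟩ := hconv (ε/2) (by linarith)
        refine ⟨N, fun n hn => ?_⟩
        have := hN n hn x hx
        have heq2 : dist (∑ k ∈ Finset.range n, v x • (g k x • y k)) (v x • f x)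
            = v x * ‖f x - ∑ k ∈ Finset.range n, g k x • y k‖ := by
          rw [dist_eq_norm, ← Finset.smul_sum, ← smul_sub, norm_smul, Real.norm_eq_abs,
            abs_of_pos hvx, norm_sub_rev]
        rw [heq2]
        linarith
      have := tendsto_nhds_unique hhs.tendsto_sum_nat hlim
      rw [this] at hhs
      simpa [hkey] using hhs
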